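/- In the setting of the restricted kernel P_A of a reversible chain, for any starting state x ∉ A and any t ≥ 0, √(μ(x))·P_x(T_A > t) ≤ (1−λ_0)^t, where 1−λ_0 is the largest eigenvalue of P_A. -/

import Mathlib

open Finset

open Matrix

/-- For the restricted kernel `P_A` of a reversible chain, with `f` the indicator of
`S∖A` (so that `P_x(T_A > t) = (P_A^t f)(x)`), one has
`√(μ(x))·P_x(T_A > t) ≤ (1−λ₀)^t` for every `x ∉ A`, where `1−λ₀` is the largest
eigenvalue of `P_A`. -/
theorem sqrt_mu_hitting_tail_le {St : Type*} [Fintype St] [DecidableEq St]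
    (p : St → St → ℝ) (μ : St → ℝ)
    (hμ : ∀ x, 0 < μ x) (hμsum : ∑ x, μ x = 1)
    (hp : ∀ x y, 0 ≤ p x y) (hrow : ∀ x, ∑ y, p x y = 1)
    (hrev : ∀ x y, μ x * p x y = μ y * p y x)
    (A : Finset St) (hA : A.Nonempty)
    (PA : Matrix St St ℝ)
    (hPA : ∀ x y, PA x y = if x ∈ A ∨ y ∈ A then 0 else p x y)
    (lam0 : ℝ) (hlam_pos : 0 < lam0) (hlam_le : lam0 ≤ 1)
    (heig : ∃ ψ : St → ℝ, ψ ≠ 0 ∧ PA.mulVec ψ = (1 - lam0) • ψ)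
    (hmaxeig : ∀ c : ℝ, (∃ ψ : St → ℝ, ψ ≠ 0 ∧ PA.mulVec ψ = c • ψ) → c ≤ 1 - lam0)
    (f : St → ℝ) (hf : ∀ x, f x = if x ∈ A then 0 else 1)
    (x : St) (hx : x ∉ A) (t : ℕ) :
    Real.sqrt (μ x) * (PA ^ t).mulVec f x ≤ (1 - lam0) ^ t := by
  classical
  set D : St → ℝ := fun y => Real.sqrt (μ y) with hD
  have hDpos : ∀ y, 0 < D y := fun y => Real.sqrt_pos.mpr (hμ y)
  have hDne : ∀ y, D y ≠ 0 := fun y => (hDpos y).ne'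
  have hDsq : ∀ y, D y * D y = μ y := fun y => Real.mul_self_sqrt (hμ y).le
  set Dm : Matrix St St ℝ := Matrix.diagonal D with hDm
  set Dinv : Matrix St St ℝ := Matrix.diagonal (fun y => (D y)⁻¹) with hDinv
  have hDmDinv : Dm * Dinv = 1 := by
    rw [hDm, hDinv, Matrix.diagonal_mul_diagonal]
    convert Matrix.diagonal_one with y
    exact mul_inv_cancel₀ (hDne y)
  have hDinvDm : Dinv * Dm = 1 := by
    rw [hDinv, hDm, Matrix.diagonal_mul_diagonal]
    convert Matrix.diagonal_one with y
    exact inv_mul_cancel₀ (hDne y)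
  set M : Matrix St St ℝ := Dm * PA * Dinv with hMdef
  have hMapply : ∀ a b, M a b = D a * PA a b * (D b)⁻¹ := by
    intro a b
    rw [hMdef, Matrix.mul_diagonal, Matrix.diagonal_mul]
  have hPAnn : ∀ a b, 0 ≤ PA a b := by
    intro a b; rw [hPA]; split
    · exact le_refl 0
    · exact hp a b
  have hMnn : ∀ a b, 0 ≤ M a b := by
    intro a b; rw [hMapply]
    exact mul_nonneg (mul_nonneg (hDpos a).le (hPAnn a b)) (inv_nonneg.mpr (hDpos b).le)
  -- M is symmetric (hermitian over ℝ)
  have hM : M.IsHermitian := by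
    refine Matrix.ext fun a b => ?_
    rw [Matrix.conjTranspose_apply, star_trivial, hMapply, hMapply]
    rw [hPA a b, hPA b a]
    by_cases hab : a ∈ A ∨ b ∈ A
    · rw [if_pos hab, if_pos (hab.symm)]; ring
    · rw [if_neg hab, if_neg (fun h => hab h.symm)]
      rw [mul_assoc, mul_assoc, ← div_eq_mul_inv, ← div_eq_mul_inv, ← mul_div_assoc,
        ← mul_div_assoc, div_eq_div_iff (hDne a) (hDne b)]
      linear_combination p b a * hDsq b - p a b * hDsq a + hrev b a
  -- powers of M
  have hMt : ∀ s : ℕ, M ^ s = Dm * PA ^ s * Dinv := by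
    intro s
    induction s with
    | zero => simp [hDmDinv]
    | succ n ih =>
      rw [pow_succ, pow_succ, ih, hMdef]
      calc Dm * PA ^ n * Dinv * (Dm * PA * Dinv)
          = Dm * PA ^ n * (Dinv * Dm) * PA * Dinv := by
            simp only [Matrix.mul_assoc]
        _ = Dm * (PA ^ n * PA) * Dinv := by rw [hDinvDm]; simp only [Matrix.mul_assoc, Matrix.mul_one, Matrix.one_mul]
  -- the conjugated indicator vector
  set g : St → ℝ := fun y => D y * f y with hg
  have hMg : ∀ s : ℕ, (M ^ s).mulVec g x = D x * (PA ^ s).mulVec f x := by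
    intro s
    have hgd : g = Dm.mulVec f := by
      funext y
      rw [hg, hDm, Matrix.mulVec_diagonal]
    rw [hgd, hMt s]
    have hcomb : Dm * PA ^ s * Dinv * Dm = Dm * PA ^ s := by
      rw [Matrix.mul_assoc, hDinvDm, Matrix.mul_one]
    rw [Matrix.mulVec_mulVec, hcomb, ← Matrix.mulVec_mulVec, hDm, Matrix.mulVec_diagonal]
  -- eigen-data of M
  set U : Matrix St St ℝ := (hM.eigenvectorUnitary : Matrix St St ℝ) with hU
  set lam : St → ℝ := hM.eigenvalues with hlam
  have hUU : U * star U = 1 := Matrix.mem_unitaryGroup_iff.mp hM.eigenvectorUnitary.2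
  have hUU' : star U * U = 1 := Matrix.mem_unitaryGroup_iff'.mp hM.eigenvectorUnitary.2
  have hspec : M = U * Matrix.diagonal lam * star U := by
    have := hM.spectral_theorem
    rw [Unitary.conjStarAlgAut_apply] at this
    exact this
  -- each eigenvalue is at most 1 - lam0
  have heig_le : ∀ i, lam i ≤ 1 - lam0 := by
    intro i
    set v : St → ℝ := ⇑(hM.eigenvectorBasis i) with hv
    have hvnz : v ≠ 0 := by
      intro h
      exact hM.eigenvectorBasis.orthonormal.ne_zero i (by ext y; exact congrFun h y)
    have hMv : M.mulVec v = lam i • v := hM.mulVec_eigenvectorBasis i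
    set ψ : St → ℝ := fun y => (D y)⁻¹ * v y with hψ
    have hψnz : ψ ≠ 0 := by
      intro h
      apply hvnz
      funext y
      have := congrFun h y
      simp only [hψ, Pi.zero_apply] at this ⊢
      have hne := inv_ne_zero (hDne y)
      exact by
        rcases mul_eq_zero.mp this with h1 | h1
        · exact absurd h1 hne
        · exact h1
    have hPAψ : PA.mulVec ψ = lam i • ψ := by
      have hψd : ψ = Dinv.mulVec v := by
        funext y; rw [hψ, hDinv, Matrix.mulVec_diagonal]
      have hPAM : Dinv * M * Dm = PA := by
        rw [hMdef]
        calc Dinv * (Dm * PA * Dinv) * Dm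
            = (Dinv * Dm) * PA * (Dinv * Dm) := by
              simp only [Matrix.mul_assoc]
          _ = PA := by rw [hDinvDm]; simp
      have step : PA.mulVec (Dinv.mulVec v) = Dinv.mulVec (M.mulVec (Dm.mulVec (Dinv.mulVec v))) := by
        rw [Matrix.mulVec_mulVec, Matrix.mulVec_mulVec, Matrix.mulVec_mulVec, Matrix.mulVec_mulVec]
        congr 1
        rw [← hPAM]
      have hDmDinvv : Dm.mulVec (Dinv.mulVec v) = v := by
        rw [Matrix.mulVec_mulVec, hDmDinv, Matrix.one_mulVec]
      rw [hψd, step, hDmDinvv, hMv]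
      exact Matrix.mulVec_smul Dinv (lam i) v
    exact hmaxeig (lam i) ⟨ψ, hψnz, hPAψ⟩
  -- Rayleigh bound for M
  have hray : ∀ h : St → ℝ, h ⬝ᵥ M.mulVec h ≤ (1 - lam0) * (h ⬝ᵥ h) := by
    intro h
    set b : St → ℝ := (star U).mulVec h with hb
    have hsUT : (star U)ᵀ = U := by
      ext a c
      simp [Matrix.conjTranspose_apply]
    have h1 : h ⬝ᵥ M.mulVec h = ∑ i, lam i * b i ^ 2 := by
      rw [hspec, ← Matrix.mulVec_mulVec, ← Matrix.mulVec_mulVec]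
      rw [dotProduct_mulVec h U]
      have hvm : Matrix.vecMul h U = b := by
        funext i
        simp only [hb, Matrix.vecMul, Matrix.mulVec, dotProduct,
          Matrix.conjTranspose_apply, star_trivial]
        exact Finset.sum_congr rfl fun y _ => mul_comm _ _
      rw [hvm]
      simp only [Matrix.mulVec_diagonal, dotProduct]
      exact Finset.sum_congr rfl fun i _ => by ring
    have h2 : h ⬝ᵥ h = ∑ i, b i ^ 2 := by
      have hbb : (∑ i, b i ^ 2) = b ⬝ᵥ b := by
        simp [dotProduct, sq]
      rw [hbb, hb, dotProduct_mulVec, Matrix.vecMul_mulVec, hsUT, hUU, Matrix.vecMul_one]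
    rw [h1, h2, Finset.mul_sum]
    apply Finset.sum_le_sum
    intro i _
    exact mul_le_mul_of_nonneg_right (heig_le i) (sq_nonneg _)
  have h1lam0 : (0:ℝ) ≤ 1 - lam0 := by linarith
  -- each eigenvalue is at least -(1 - lam0), hence |lam i| ≤ 1 - lam0
  have habs : ∀ i, |lam i| ≤ 1 - lam0 := by
    intro i
    set v : St → ℝ := ⇑(hM.eigenvectorBasis i) with hv
    have hvnz : v ≠ 0 := by
      intro h
      exact hM.eigenvectorBasis.orthonormal.ne_zero i (by ext y; exact congrFun h y)
    have hMv : M.mulVec v = lam i • v := hM.mulVec_eigenvectorBasis i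
    have hvv : 0 < v ⬝ᵥ v := by
      have hnn : 0 ≤ v ⬝ᵥ v := Finset.sum_nonneg fun y _ => mul_self_nonneg _
      rcases hnn.lt_or_eq with h | h
      · exact h
      · exfalso
        apply hvnz
        funext y
        have : ∀ z ∈ Finset.univ, (0:ℝ) ≤ v z * v z := fun z _ => mul_self_nonneg _
        have hz := (Finset.sum_eq_zero_iff_of_nonneg this).mp h.symm y (Finset.mem_univ y)
        exact (mul_self_eq_zero).mp hz
    have hvMv : v ⬝ᵥ M.mulVec v = lam i * (v ⬝ᵥ v) := by
      rw [hMv, dotProduct_smul, smul_eq_mul]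
    -- |v ⬝ M v| ≤ |v| ⬝ M |v|
    have hAbsBound : |v ⬝ᵥ M.mulVec v| ≤ (fun y => |v y|) ⬝ᵥ M.mulVec (fun y => |v y|) := by
      simp only [dotProduct, Matrix.mulVec]
      calc |∑ a, v a * ∑ c, M a c * v c|
          ≤ ∑ a, |v a * ∑ c, M a c * v c| := Finset.abs_sum_le_sum_abs _ _
        _ ≤ ∑ a, |v a| * ∑ c, M a c * |v c| := by
            apply Finset.sum_le_sum
            intro a _
            rw [abs_mul]
            apply mul_le_mul_of_nonneg_left _ (abs_nonneg _)
            calc |∑ c, M a c * v c| ≤ ∑ c, |M a c * v c| := Finset.abs_sum_le_sum_abs _ _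
              _ = ∑ c, M a c * |v c| := by
                  apply Finset.sum_congr rfl
                  intro c _
                  rw [abs_mul, abs_of_nonneg (hMnn a c)]
    have habsvv : (fun y => |v y|) ⬝ᵥ (fun y => |v y|) = v ⬝ᵥ v := by
      simp only [dotProduct]
      exact Finset.sum_congr rfl fun y _ => (abs_mul_abs_self _)
    have := hray (fun y => |v y|)
    rw [habsvv] at this
    have hfinal : |lam i| * (v ⬝ᵥ v) ≤ (1 - lam0) * (v ⬝ᵥ v) := by
      calc |lam i| * (v ⬝ᵥ v) = |lam i * (v ⬝ᵥ v)| := by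
            rw [abs_mul, abs_of_pos hvv]
        _ = |v ⬝ᵥ M.mulVec v| := by rw [hvMv]
        _ ≤ (fun y => |v y|) ⬝ᵥ M.mulVec (fun y => |v y|) := hAbsBound
        _ ≤ (1 - lam0) * (v ⬝ᵥ v) := this
    exact le_of_mul_le_mul_right hfinal hvv
  -- main computation
  have hMtg : (M ^ t).mulVec g x = ∑ i, U x i * (lam i ^ t * ((star U).mulVec g) i) := by
    have hMts : M ^ t = U * Matrix.diagonal (fun i => lam i ^ t) * star U := by
      induction t with
      | zero =>
        rw [pow_zero, show Matrix.diagonal (fun i : St => lam i ^ 0) = 1 by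
          simp [Matrix.diagonal_one], Matrix.mul_one, hUU]
      | succ n ih =>
        rw [pow_succ, ih, hspec]
        calc U * Matrix.diagonal (fun i => lam i ^ n) * star U * (U * Matrix.diagonal lam * star U)
            = U * Matrix.diagonal (fun i => lam i ^ n) * (star U * U) * Matrix.diagonal lam * star U := by
              simp only [Matrix.mul_assoc]
          _ = U * (Matrix.diagonal (fun i => lam i ^ n) * Matrix.diagonal lam) * star U := by
              rw [hUU']; simp only [Matrix.mul_one, Matrix.mul_assoc, Matrix.one_mul]
          _ = U * Matrix.diagonal (fun i => lam i ^ (n + 1)) * star U := by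
              rw [Matrix.diagonal_mul_diagonal]
              simp only [← pow_succ]
    rw [hMts, ← Matrix.mulVec_mulVec, ← Matrix.mulVec_mulVec]
    have hdd : Matrix.diagonal (fun i => lam i ^ t) *ᵥ ((star U) *ᵥ g) =
        fun i => lam i ^ t * ((star U) *ᵥ g) i := by
      funext i; exact Matrix.mulVec_diagonal _ _ i
    rw [hdd]
    simp only [Matrix.mulVec, dotProduct]
  set c : St → ℝ := (star U).mulVec g with hc
  -- row of U has unit norm
  have hrowU : ∑ i, U x i ^ 2 = 1 := by
    have h0 : (U * star U) x x = (1 : Matrix St St ℝ) x x := by rw [hUU]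
    simp only [Matrix.mul_apply, Matrix.one_apply_eq, Matrix.star_apply,
      Matrix.conjTranspose_apply, star_trivial] at h0
    rw [← h0]
    exact Finset.sum_congr rfl fun i _ => by rw [sq]
  -- norm of c is at most 1
  have hcnorm : ∑ i, c i ^ 2 ≤ 1 := by
    have hcg : ∑ i, c i ^ 2 = ∑ y, g y ^ 2 := by
      have h1 : (∑ i, c i ^ 2) = c ⬝ᵥ c := by simp [dotProduct, sq]
      have h2 : (∑ y, g y ^ 2) = g ⬝ᵥ g := by simp [dotProduct, sq]
      have h3 : (star U)ᵀ = U := by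
        ext a b
        simp [Matrix.conjTranspose_apply]
      rw [h1, h2, hc, dotProduct_mulVec, Matrix.vecMul_mulVec, h3, hUU,
        Matrix.vecMul_one]
    rw [hcg]
    have : ∀ y, g y ^ 2 ≤ μ y := by
      intro y
      rw [hg]
      simp only
      rw [mul_pow, sq, hDsq, hf]
      by_cases hy : y ∈ A
      · rw [if_pos hy]
        simpa using (hμ y).le
      · rw [if_neg hy]
        simp
    calc ∑ y, g y ^ 2 ≤ ∑ y, μ y := Finset.sum_le_sum fun y _ => this y
      _ = 1 := hμsum
  -- finish
  have key : D x * (PA ^ t).mulVec f x ≤ (1 - lam0) ^ t := by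
    rw [← hMg t, hMtg]
    calc ∑ i, U x i * (lam i ^ t * c i)
        ≤ ∑ i, |U x i| * ((1 - lam0) ^ t * |c i|) := by
          apply Finset.sum_le_sum
          intro i _
          calc U x i * (lam i ^ t * c i) ≤ |U x i * (lam i ^ t * c i)| := le_abs_self _
            _ = |U x i| * (|lam i| ^ t * |c i|) := by rw [abs_mul, abs_mul, abs_pow]
            _ ≤ |U x i| * ((1 - lam0) ^ t * |c i|) := by
                apply mul_le_mul_of_nonneg_left _ (abs_nonneg _)
                apply mul_le_mul_of_nonneg_right _ (abs_nonneg _)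
                exact pow_le_pow_left₀ (abs_nonneg _) (habs i) t
      _ = (1 - lam0) ^ t * ∑ i, |U x i| * |c i| := by
          rw [Finset.mul_sum]
          exact Finset.sum_congr rfl fun i _ => by ring
      _ ≤ (1 - lam0) ^ t * 1 := by
          apply mul_le_mul_of_nonneg_left _ (pow_nonneg h1lam0 t)
          have hCS := Finset.sum_mul_sq_le_sq_mul_sq Finset.univ (fun i => |U x i|)
            (fun i => |c i|)
          simp only [sq_abs] at hCS
          have hb : (∑ i, |U x i| * |c i|) ^ 2 ≤ 1 := by
            calc (∑ i, |U x i| * |c i|) ^ 2 ≤ (∑ i, U x i ^ 2) * ∑ i, c i ^ 2 := hCS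
              _ ≤ 1 * 1 := by
                  apply mul_le_mul (le_of_eq hrowU) hcnorm
                    (Finset.sum_nonneg fun i _ => sq_nonneg _) zero_le_one
              _ = 1 := one_mul 1
          nlinarith [Finset.sum_nonneg (fun i (_ : i ∈ Finset.univ) =>
            mul_nonneg (abs_nonneg (U x i)) (abs_nonneg (c i)))]
      _ = (1 - lam0) ^ t := mul_one _
  exact key
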